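/- arXiv:2007.11929 — 8 statements merged into one kernel-verified Lean document; each statement's English description precedes it below -/
import Mathlib

section
/- Let n ≥ 1 and let m pairs (i_1,j_1),…,(i_m,j_m) of indices in Fin n with i_k ≠ j_k be given. Then the Lie subalgebra of Matrix (Fin n) (Fin n) ℝ generated by {B i_1 j_1, …, B i_m j_m} equals so(n) if and only if the simple graph G_contr on Fin n whose edge set is exactly {{i_1,j_1},…,{i_m,j_m}} is connected. (This is the Lie algebra rank condition characterizing controllability of the driftless bilinear system dX/dt = (∑_k u_k(t) B i_k j_k) X on SO(n).) -/
open Matrix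

attribute [local instance 100] LieRing.ofAssociativeRing

/-- The standard basis matrix `E i j`. -/
noncomputable def E {n : ℕ} (i j : Fin n) : Matrix (Fin n) (Fin n) ℝ :=
  Matrix.single i j 1

/-- `B i j = E i j - E j i`, a basis element of `so(n)`. -/
noncomputable def B {n : ℕ} (i j : Fin n) : Matrix (Fin n) (Fin n) ℝ :=
  E i j - E j i

/-- The special orthogonal Lie algebra `so(n)` of skew-symmetric matrices. -/
def so (n : ℕ) : LieSubalgebra ℝ (Matrix (Fin n) (Fin n) ℝ) where
  carrier := {X | Xᵀ = -X}
  add_mem' := by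
    intro X Y hX hY
    simp only [Set.mem_setOf_eq] at *
    rw [Matrix.transpose_add, hX, hY, neg_add]
  zero_mem' := by simp
  smul_mem' := by
    intro c X hX
    simp only [Set.mem_setOf_eq] at *
    rw [Matrix.transpose_smul, hX, smul_neg]
  lie_mem' := by
    intro X Y hX hY
    simp only [Set.mem_setOf_eq] at *
    rw [Ring.lie_def, Matrix.transpose_sub, Matrix.transpose_mul, Matrix.transpose_mul, hX, hY]
    simp [neg_mul_neg, neg_sub]

lemma B_transpose {n : ℕ} (i j : Fin n) : (B i j)ᵀ = -(B i j) := by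
  ext a b
  simp [B, E, Matrix.single, transpose_apply, and_comm]

lemma B_apply {n : ℕ} (i j a b : Fin n) :
    B i j a b = (if i = a ∧ j = b then (1:ℝ) else 0) - (if j = a ∧ i = b then 1 else 0) := by
  simp [B, E, Matrix.single]

lemma B_swap {n : ℕ} (i j : Fin n) : B j i = -(B i j) := by
  simp [B]

lemma lie_B {n : ℕ} {i j k : Fin n} (hij : i ≠ j) (hjk : j ≠ k) (hik : i ≠ k) :
    ⁅B i j, B j k⁆ = B i k := by
  simp only [B, E, Ring.lie_def, sub_mul, mul_sub]
  rw [Matrix.single_mul_single_same, Matrix.single_mul_single_of_ne (h := hij),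
    Matrix.single_mul_single_of_ne (h := hjk), Matrix.single_mul_single_of_ne (h := hik),
    Matrix.single_mul_single_of_ne (h := hik.symm), Matrix.single_mul_single_of_ne (h := hij.symm),
    Matrix.single_mul_single_of_ne (h := hjk.symm), Matrix.single_mul_single_same]
  simp

lemma skew_eq_sum {n : ℕ} (X : Matrix (Fin n) (Fin n) ℝ) (hX : Xᵀ = -X) :
    X = ∑ p : Fin n × Fin n, (X p.1 p.2 / 2) • B p.1 p.2 := by
  ext a b
  rw [Matrix.sum_apply]
  have hterm : ∀ p : Fin n × Fin n,
      ((X p.1 p.2 / 2) • B p.1 p.2) a b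
        = (if p = (a, b) then X p.1 p.2 / 2 else 0)
          - (if p = (b, a) then X p.1 p.2 / 2 else 0) := by
    intro p
    rw [Matrix.smul_apply, B_apply, smul_eq_mul, mul_sub]
    congr 1 <;> rw [mul_ite, mul_one, mul_zero] <;> congr 1 <;>
      simp [Prod.ext_iff, eq_comm, and_comm]
  rw [Finset.sum_congr rfl fun p _ => hterm p, Finset.sum_sub_distrib,
    Finset.sum_ite_eq' Finset.univ (a, b), Finset.sum_ite_eq' Finset.univ (b, a)]
  have hba : X b a = -X a b := by
    have := congrFun (congrFun hX a) b
    simpa [Matrix.transpose_apply] using this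
  simp [hba]
  ring

/-- Lie algebra rank condition for the driftless bilinear system on `SO(n)`:
the Lie algebra generated by the controlled terms equals `so(n)` iff the controlled
interaction graph is connected. -/
theorem driftless_SOn_controllability_iff_connected
    (n m : ℕ) (hn : 1 ≤ n) (ij : Fin m → Fin n × Fin n)
    (hij : ∀ k, (ij k).1 ≠ (ij k).2) :
    LieSubalgebra.lieSpan ℝ (Matrix (Fin n) (Fin n) ℝ)
        (Set.range fun k => B (ij k).1 (ij k).2) = so n ↔
      (SimpleGraph.fromRel fun a b => ∃ k, ij k = (a, b)).Connected := by
  set G := (SimpleGraph.fromRel fun a b => ∃ k, ij k = (a, b)) with hG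
  set L := LieSubalgebra.lieSpan ℝ (Matrix (Fin n) (Fin n) ℝ)
      (Set.range fun k => B (ij k).1 (ij k).2) with hL
  constructor
  · -- span = so(n) → connected
    intro hso
    rw [SimpleGraph.connected_iff]
    refine ⟨?_, ⟨⟨0, hn⟩⟩⟩
    intro a b
    by_contra hnr
    have hab : a ≠ b := fun h => hnr (h ▸ SimpleGraph.Reachable.refl a)
    -- the Lie subalgebra of matrices supported on reachable pairs
    set S : LieSubalgebra ℝ (Matrix (Fin n) (Fin n) ℝ) :=
      { carrier := {X | ∀ p q, ¬ G.Reachable p q → X p q = 0}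
        add_mem' := by
          intro X Y hX hY p q h
          simp [Matrix.add_apply, hX p q h, hY p q h]
        zero_mem' := by intro p q h; simp
        smul_mem' := by
          intro c X hX p q h
          simp [Matrix.smul_apply, hX p q h]
        lie_mem' := by
          intro X Y hX hY p q h
          rw [Ring.lie_def, Matrix.sub_apply, Matrix.mul_apply, Matrix.mul_apply]
          have h1 : ∀ r : Fin n, X p r * Y r q = 0 := by
            intro r
            by_cases hpr : G.Reachable p r
            · have : ¬ G.Reachable r q := fun hrq => h (hpr.trans hrq)
              rw [hY r q this, mul_zero]
            · rw [hX p r hpr, zero_mul]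
          have h2 : ∀ r : Fin n, Y p r * X r q = 0 := by
            intro r
            by_cases hpr : G.Reachable p r
            · have : ¬ G.Reachable r q := fun hrq => h (hpr.trans hrq)
              rw [hX r q this, mul_zero]
            · rw [hY p r hpr, zero_mul]
          rw [Finset.sum_eq_zero fun r _ => h1 r, Finset.sum_eq_zero fun r _ => h2 r,
            sub_zero] } with hS
    have hle : L ≤ S := by
      rw [hL]
      apply (LieSubalgebra.lieSpan_le).mpr
      rintro _ ⟨k, rfl⟩
      intro p q h
      show B (ij k).1 (ij k).2 p q = 0
      rw [B_apply]
      have hadj : G.Adj (ij k).1 (ij k).2 :=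
        SimpleGraph.fromRel_adj _ _ _ |>.mpr ⟨hij k, Or.inl ⟨k, rfl⟩⟩
      have hne1 : ¬((ij k).1 = p ∧ (ij k).2 = q) := by
        rintro ⟨rfl, rfl⟩; exact h hadj.reachable
      have hne2 : ¬((ij k).2 = p ∧ (ij k).1 = q) := by
        rintro ⟨rfl, rfl⟩; exact h hadj.symm.reachable
      rw [if_neg hne1, if_neg hne2, sub_zero]
    have hBab : B a b ∈ L := by
      rw [hso]
      exact B_transpose a b
    have := hle hBab a b hnr
    rw [B_apply] at this
    simp [hab] at this
  · -- connected → span = so(n)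
    intro hconn
    apply le_antisymm
    · apply (LieSubalgebra.lieSpan_le).mpr
      rintro _ ⟨k, rfl⟩
      exact B_transpose _ _
    · -- every B a b for adjacent pairs is in L
      have hgen : ∀ a b : Fin n, G.Adj a b → B a b ∈ L := by
        intro a b hadj
        rw [SimpleGraph.fromRel_adj] at hadj
        obtain ⟨hne, hk | hk⟩ := hadj
        · obtain ⟨k, hk⟩ := hk
          have : B a b = B (ij k).1 (ij k).2 := by rw [hk]
          rw [this]
          exact LieSubalgebra.subset_lieSpan ⟨k, rfl⟩
        · obtain ⟨k, hk⟩ := hk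
          have hm : B a b = -(B (ij k).1 (ij k).2) := by
            rw [hk]; exact B_swap b a
          rw [hm]
          exact neg_mem (LieSubalgebra.subset_lieSpan ⟨k, rfl⟩)
      have key : ∀ a b : Fin n, G.Walk a b → a ≠ b → B a b ∈ L := by
        intro a b w
        induction w with
        | nil => intro h; exact absurd rfl h
        | @cons u v x hadj p ih =>
          intro hux
          by_cases hvx : v = x
          · subst hvx; exact hgen u v hadj
          · have h1 : B u v ∈ L := hgen u v hadj
            have h2 : B v x ∈ L := ih hvx
            have := L.lie_mem h1 h2
            rwa [lie_B hadj.ne hvx hux] at this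
      intro X hX
      have hXskew : Xᵀ = -X := hX
      rw [show X = ∑ p : Fin n × Fin n, (X p.1 p.2 / 2) • B p.1 p.2 from skew_eq_sum X hXskew]
      apply sum_mem
      intro p _
      by_cases hp : p.1 = p.2
      · have : B p.1 p.2 = 0 := by rw [hp, B, sub_self]
        rw [this, smul_zero]
        exact zero_mem L
      · have hr : G.Reachable p.1 p.2 := hconn.preconnected p.1 p.2
        obtain ⟨w⟩ := hr
        exact L.smul_mem _ (key p.1 p.2 w hp)
end

section
/- Let n ≥ 1, let (i_1,j_1),…,(i_{m_1},j_{m_1}) be pairs in Fin n with i_k ≠ j_k, and let (i_{m_1+1},j_{m_1+1}),…,(i_{m_2},j_{m_2}) be further pairs in Fin n with i_k ≠ j_k. Then the Lie subalgebra of Matrix (Fin n) (Fin n) ℝ generated by {E i_1 j_1, …, E i_{m_1} j_{m_1}} ∪ {C i_{m_1+1} j_{m_1+1}, …, C i_{m_2} j_{m_2}} equals sl(n,ℝ) if and only if the digraph on Fin n whose arcs are exactly (i_1,j_1),…,(i_{m_1},j_{m_1}) is strongly connected. (This is the Lie algebra rank condition characterizing controllability of the driftless bilinear system on SL(n).) 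-/
open Matrix

attribute [local instance 100] LieRing.ofAssociativeRing

/-- `C i j = E i i - E j j`, a diagonal traceless matrix. -/
noncomputable def C {n : ℕ} (i j : Fin n) : Matrix (Fin n) (Fin n) ℝ :=
  E i i - E j j

/-- The special linear Lie algebra `sl(n, ℝ)` of traceless matrices. -/
noncomputable def sl (n : ℕ) : LieSubalgebra ℝ (Matrix (Fin n) (Fin n) ℝ) :=
  LieAlgebra.SpecialLinear.sl (Fin n) ℝ

/-- A digraph is strongly connected if every vertex is reachable from every vertex. -/
def StronglyConnected {V : Type*} (Adj : V → V → Prop) : Prop :=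
  ∀ u v : V, Relation.ReflTransGen Adj u v

lemma mem_sl {n : ℕ} {X : Matrix (Fin n) (Fin n) ℝ} : X ∈ sl n ↔ Matrix.trace X = 0 := Iff.rfl

lemma E_mul_E {n : ℕ} (a b c : Fin n) : E a b * E b c = E a c := by
  simp [E, Matrix.single_mul_single_same]

lemma lie_E_E {n : ℕ} {a c : Fin n} (b : Fin n) (hac : a ≠ c) : ⁅E a b, E b c⁆ = E a c := by
  rw [Ring.lie_def, E_mul_E]
  rw [show E b c * E a b = 0 from Matrix.single_mul_single_of_ne 1 b c a (Ne.symm hac) 1, sub_zero]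

lemma lie_E_E_same {n : ℕ} (a b : Fin n) : ⁅E a b, E b a⁆ = C a b := by
  rw [Ring.lie_def, E_mul_E, E_mul_E, C]

lemma trace_E_ne {n : ℕ} {a b : Fin n} (h : a ≠ b) : Matrix.trace (E a b) = 0 :=
  Matrix.trace_single_eq_of_ne a b 1 h

lemma trace_C {n : ℕ} (a b : Fin n) : Matrix.trace (C a b) = 0 := by
  simp [C, E, Matrix.trace_single_eq_same]

/-- Block "triangular" matrices w.r.t. a set R: entries from R to its complement vanish. -/
noncomputable def blockLie {n : ℕ} (R : Set (Fin n)) :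
    LieSubalgebra ℝ (Matrix (Fin n) (Fin n) ℝ) where
  carrier := {X | ∀ a ∈ R, ∀ b ∉ R, X a b = 0}
  add_mem' := by
    intro X Y hX hY a ha b hb
    simp [Matrix.add_apply, hX a ha b hb, hY a ha b hb]
  zero_mem' := by intro a _ b _; simp
  smul_mem' := by
    intro r X hX a ha b hb
    simp [Matrix.smul_apply, hX a ha b hb]
  lie_mem' := by
    intro X Y hX hY a ha b hb
    simp only [Ring.lie_def, Matrix.sub_apply, Matrix.mul_apply]
    have h : ∀ c, X a c * Y c b - Y a c * X c b = 0 := by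
      intro c
      by_cases hc : c ∈ R
      · rw [hY c hc b hb, hX c hc b hb]; ring
      · rw [hX a ha c hc, hY a ha c hc]; ring
    rw [← Finset.sum_sub_distrib]
    exact Finset.sum_eq_zero fun c _ => h c

lemma mem_blockLie {n : ℕ} {R : Set (Fin n)} {X : Matrix (Fin n) (Fin n) ℝ} :
    X ∈ blockLie R ↔ ∀ a ∈ R, ∀ b ∉ R, X a b = 0 := Iff.rfl

/-- Lie algebra rank condition for the driftless bilinear system on `SL(n)`:
the Lie algebra generated by the controlled terms equals `sl(n, ℝ)` iff the controlled
interaction digraph is strongly connected. -/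
theorem driftless_SLn_controllability_iff_strongly_connected
    (n m₁ m₂ : ℕ) (hn : 1 ≤ n)
    (ijE : Fin m₁ → Fin n × Fin n) (hijE : ∀ k, (ijE k).1 ≠ (ijE k).2)
    (ijC : Fin m₂ → Fin n × Fin n) (hijC : ∀ k, (ijC k).1 ≠ (ijC k).2) :
    LieSubalgebra.lieSpan ℝ (Matrix (Fin n) (Fin n) ℝ)
        ((Set.range fun k => E (ijE k).1 (ijE k).2) ∪
          (Set.range fun k => C (ijC k).1 (ijC k).2)) = sl n ↔
      StronglyConnected (fun a b : Fin n => ∃ k, ijE k = (a, b)) := by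
  set Adj : Fin n → Fin n → Prop := fun a b => ∃ k, ijE k = (a, b) with hAdj
  set S : Set (Matrix (Fin n) (Fin n) ℝ) :=
    (Set.range fun k => E (ijE k).1 (ijE k).2) ∪
      (Set.range fun k => C (ijC k).1 (ijC k).2) with hS
  constructor
  · -- forward: span = sl → strongly connected
    intro h u v
    by_contra hnr
    set R : Set (Fin n) := {w | Relation.ReflTransGen Adj u w} with hR
    have huR : u ∈ R := Relation.ReflTransGen.refl
    have hvR : v ∉ R := hnr
    have hSW : S ⊆ blockLie R := by
      rintro X (⟨k, rfl⟩ | ⟨k, rfl⟩)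
      · intro a ha b hb
        simp only [E, Matrix.single, Matrix.of_apply]
        by_cases hcase : (ijE k).1 = a ∧ (ijE k).2 = b
        · exfalso
          apply hb
          exact Relation.ReflTransGen.tail (hcase.1 ▸ ha) ⟨k, Prod.ext hcase.1 hcase.2⟩
        · exact if_neg hcase
      · intro a ha b hb
        have hab : a ≠ b := fun hh => hb (hh ▸ ha)
        simp only [C, E, Matrix.sub_apply, Matrix.single, Matrix.of_apply]
        rw [if_neg (fun hh => hab (hh.1.symm.trans hh.2)),
          if_neg (fun hh => hab (hh.1.symm.trans hh.2)), sub_zero]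
    have hle : LieSubalgebra.lieSpan ℝ (Matrix (Fin n) (Fin n) ℝ) S ≤ blockLie R :=
      (LieSubalgebra.lieSpan_le).mpr hSW
    have huv : u ≠ v := fun hh => hnr (hh ▸ Relation.ReflTransGen.refl)
    have hEuv : E u v ∈ sl n := mem_sl.mpr (trace_E_ne huv)
    have : E u v ∈ blockLie R := hle (h ▸ hEuv)
    have hzero : E u v u v = 0 := this u huR v hvR
    simp [E, Matrix.single] at hzero
  · -- backward: strongly connected → span = sl
    intro hsc
    set L := LieSubalgebra.lieSpan ℝ (Matrix (Fin n) (Fin n) ℝ) S with hL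
    apply le_antisymm
    · apply (LieSubalgebra.lieSpan_le).mpr
      rintro X (⟨k, rfl⟩ | ⟨k, rfl⟩)
      · exact mem_sl.mpr (trace_E_ne (hijE k))
      · exact mem_sl.mpr (trace_C _ _)
    · intro X hX
      have htr : Matrix.trace X = 0 := mem_sl.mp hX
      -- all off-diagonal elementary matrices lie in L
      have key : ∀ a b : Fin n, a ≠ b → E a b ∈ L := by
        intro a b
        have hr : Relation.ReflTransGen Adj a b := hsc a b
        induction hr using Relation.ReflTransGen.head_induction_on with
        | refl => intro hh; exact absurd rfl hh
        | @head a' c hadj htail ih =>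
          intro hab
          obtain ⟨k, hk⟩ := hadj
          have hEac : E a' c ∈ L := by
            apply LieSubalgebra.subset_lieSpan
            exact Or.inl ⟨k, by simp only [hk]⟩
          by_cases hcb : c = b
          · exact hcb ▸ hEac
          · have hEcb : E c b ∈ L := ih hcb
            have := L.lie_mem hEac hEcb
            rwa [lie_E_E c hab] at this
      set z : Fin n := ⟨0, hn⟩ with hz
      have hCz : ∀ i : Fin n, C i z ∈ L := by
        intro i
        by_cases hiz : i = z
        · rw [hiz, C, sub_self]; exact L.zero_mem
        · have := L.lie_mem (key i z hiz) (key z i (Ne.symm hiz))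
          rwa [lie_E_E_same] at this
      set g : Fin n → Fin n → Matrix (Fin n) (Fin n) ℝ :=
        fun i j => X i j • E i j - (if i = j then X i j • E z z else 0) with hg
      have hgmem : ∀ i j, g i j ∈ L := by
        intro i j
        by_cases hij : i = j
        · subst hij
          have : g i i = X i i • C i z := by
            simp [hg, C, smul_sub]
          rw [this]
          exact L.smul_mem _ (hCz i)
        · have : g i j = X i j • E i j := by simp only [hg, if_neg hij, sub_zero]
          rw [this]
          exact L.smul_mem _ (key i j hij)
      have hXeq : X = ∑ i, ∑ j, g i j := by
        have h1 : ∀ i j : Fin n, Matrix.single i j (X i j) = X i j • E i j := by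
          intro i j
          rw [E, Matrix.smul_single, smul_eq_mul, mul_one]
        calc X = ∑ i, ∑ j, Matrix.single i j (X i j) :=
                Matrix.matrix_eq_sum_single X
          _ = ∑ i, ∑ j, (X i j • E i j) := by simp only [h1]
          _ = ∑ i, ∑ j, g i j := by
              rw [eq_comm]
              simp only [hg]
              have hrow : ∀ i : Fin n,
                  (∑ j, (X i j • E i j - (if i = j then X i j • E z z else 0)))
                    = (∑ j, X i j • E i j) - X i i • E z z := by
                intro i
                rw [Finset.sum_sub_distrib]
                congr 1
                rw [Finset.sum_ite_eq]
                simp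
              simp only [hrow]
              rw [Finset.sum_sub_distrib, ← Finset.sum_smul]
              have hdiag : (∑ i, X i i) = 0 := by
                simpa [Matrix.trace, Matrix.diag] using htr
              rw [hdiag, zero_smul, sub_zero]
      rw [hXeq]
      exact sum_mem fun i _ => sum_mem fun j _ => hgmem i j
end

section
/- Let n ≥ 1 and let (i_1,j_1),…,(i_m,j_m) be pairs in Fin n (equal indices, i.e., self-loops, are allowed). Then the Lie subalgebra of Matrix (Fin n) (Fin n) ℝ generated by {E i_1 j_1, …, E i_m j_m} is all of Matrix (Fin n) (Fin n) ℝ (i.e., equals ⊤) if and only if the digraph on Fin n with arc set {(i_1,j_1),…,(i_m,j_m)} is strongly connected and has at least one self-loop (there exists k with i_k = j_k). (This is the Lie algebra rank condition characterizing controllability of the driftless bilinear system on GL⁺(n).) -/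
open Matrix

attribute [local instance 100] LieRing.ofAssociativeRing

/-- The trace-zero matrices form a Lie subalgebra. -/
def slSub (n : ℕ) : LieSubalgebra ℝ (Matrix (Fin n) (Fin n) ℝ) where
  carrier := {A | Matrix.trace A = 0}
  add_mem' := by intro a b ha hb; simp_all [Set.mem_setOf_eq, Matrix.trace_add]
  zero_mem' := by simp [Set.mem_setOf_eq]
  smul_mem' := by intro c a ha; simp_all [Set.mem_setOf_eq, Matrix.trace_smul]
  lie_mem' := by
    intro a b _ _
    show Matrix.trace (a * b - b * a) = 0
    rw [Matrix.trace_sub, Matrix.trace_mul_comm, sub_self]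

/-- Matrices supported on reachable pairs form a Lie subalgebra. -/
def reachSub {n : ℕ} (Adj : Fin n → Fin n → Prop) :
    LieSubalgebra ℝ (Matrix (Fin n) (Fin n) ℝ) where
  carrier := {A | ∀ x y, ¬ Relation.ReflTransGen Adj x y → A x y = 0}
  add_mem' := by
    intro a b ha hb x y h
    simp [Matrix.add_apply, ha x y h, hb x y h]
  zero_mem' := by intro x y h; rfl
  smul_mem' := by
    intro c a ha x y h
    simp [Matrix.smul_apply, ha x y h]
  lie_mem' := by
    intro a b ha hb x y h
    have key : ∀ z, a x z * b z y = 0 ∧ b x z * a z y = 0 := by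
      intro z
      by_cases h1 : Relation.ReflTransGen Adj x z
      · have h2 : ¬ Relation.ReflTransGen Adj z y := fun h2 => h (h1.trans h2)
        exact ⟨by rw [hb z y h2, mul_zero], by rw [ha z y h2, mul_zero]⟩
      · exact ⟨by rw [ha x z h1, zero_mul], by rw [hb x z h1, zero_mul]⟩
    show (a * b - b * a) x y = 0
    simp only [Matrix.sub_apply, Matrix.mul_apply]
    rw [Finset.sum_eq_zero (fun z _ => (key z).1),
      Finset.sum_eq_zero (fun z _ => (key z).2), sub_zero]

lemma E_bracket_path {n : ℕ} {a b : Fin n} (c : Fin n) (hab : a ≠ b) :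
    ⁅E a c, E c b⁆ = E a b := by
  show E a c * E c b - E c b * E a c = E a b
  rw [E, E, E, Matrix.single_mul_single_same,
    Matrix.single_mul_single_of_ne (i := c) (j := b) (k := a) (c := 1) (Ne.symm hab) 1, mul_one, sub_zero]

lemma E_bracket_diag {n : ℕ} (a b : Fin n) :
    ⁅E a b, E b a⁆ = E a a - E b b := by
  show E a b * E b a - E b a * E a b = E a a - E b b
  simp [E]

/-- Lie algebra rank condition for the driftless bilinear system on `GL⁺(n)`:
the Lie algebra generated by the controlled terms is all of `gl(n, ℝ)` iff the
controlled interaction digraph is strongly connected and has at least one self-loop. -/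
theorem driftless_GLn_controllability_iff
    (n m : ℕ) (hn : 1 ≤ n) (ij : Fin m → Fin n × Fin n) :
    LieSubalgebra.lieSpan ℝ (Matrix (Fin n) (Fin n) ℝ)
        (Set.range fun k => E (ij k).1 (ij k).2) = ⊤ ↔
      (StronglyConnected (fun a b : Fin n => ∃ k, ij k = (a, b)) ∧
        ∃ k, (ij k).1 = (ij k).2) := by
  set Adj : Fin n → Fin n → Prop := fun a b => ∃ k, ij k = (a, b) with hAdj
  set L := LieSubalgebra.lieSpan ℝ (Matrix (Fin n) (Fin n) ℝ)
      (Set.range fun k => E (ij k).1 (ij k).2) with hL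
  constructor
  · intro htop
    constructor
    · -- strong connectivity
      intro u v
      by_contra hnr
      have hle : L ≤ reachSub Adj := by
        apply LieSubalgebra.lieSpan_le.mpr
        rintro _ ⟨k, rfl⟩
        intro x y hxy
        by_cases hx : (ij k).1 = x ∧ (ij k).2 = y
        · exfalso
          apply hxy
          obtain ⟨h1, h2⟩ := hx
          exact Relation.ReflTransGen.single ⟨k, by rw [← h1, ← h2]⟩
        · simp [E, Matrix.single, hx]
      have hmem : E u v ∈ reachSub Adj := hle (htop ▸ LieSubalgebra.mem_top _)
      have := hmem u v hnr
      simp [E, Matrix.single] at this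
    · -- self loop
      by_contra hns
      push_neg at hns
      have hle : L ≤ slSub n := by
        apply LieSubalgebra.lieSpan_le.mpr
        rintro _ ⟨k, rfl⟩
        show Matrix.trace (E (ij k).1 (ij k).2) = 0
        rw [E, Matrix.trace]
        have : Matrix.diag (Matrix.single (ij k).1 (ij k).2 (1:ℝ)) = 0 :=
          Matrix.diag_single_of_ne _ _ _ (fun h => hns k h)
        rw [this]; simp
      have h1 : (1 : Matrix (Fin n) (Fin n) ℝ) ∈ slSub n :=
        hle (htop ▸ LieSubalgebra.mem_top _)
      have : (Matrix.trace (1 : Matrix (Fin n) (Fin n) ℝ)) = 0 := h1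
      rw [Matrix.trace_one] at this
      simp at this
      omega
  · rintro ⟨hsc, k0, hk0⟩
    have hgen : ∀ k, E (ij k).1 (ij k).2 ∈ L :=
      fun k => LieSubalgebra.subset_lieSpan ⟨k, rfl⟩
    have hoff : ∀ a b : Fin n, a ≠ b → E a b ∈ L := by
      have key : ∀ a b : Fin n, Relation.ReflTransGen Adj a b → a ≠ b → E a b ∈ L := by
        intro a b h
        induction h with
        | refl => intro h; exact absurd rfl h
        | @tail c b h1 h2 ih =>
          intro hab
          obtain ⟨k, hk⟩ := h2
          have hcb : E c b ∈ L := by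
            have := hgen k
            rw [hk] at this
            exact this
          by_cases hac : a = c
          · rw [hac]; exact hcb
          · exact E_bracket_path c hab ▸ L.lie_mem (ih hac) hcb
      intro a b hab
      exact key a b (hsc a b) hab
    have hvv : E (ij k0).1 (ij k0).1 ∈ L := by
      have := hgen k0
      rwa [← hk0] at this
    have hdiag : ∀ a : Fin n, E a a ∈ L := by
      intro a
      by_cases hav : a = (ij k0).1
      · rw [hav]; exact hvv
      · have h1 : E a (ij k0).1 ∈ L := hoff _ _ hav
        have h2 : E (ij k0).1 a ∈ L := hoff _ _ (Ne.symm hav)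
        have hb : E a a - E (ij k0).1 (ij k0).1 ∈ L :=
          E_bracket_diag a (ij k0).1 ▸ L.lie_mem h1 h2
        have := L.add_mem hb hvv
        simpa using this
    have hall : ∀ a b : Fin n, E a b ∈ L := by
      intro a b
      by_cases h : a = b
      · rw [h]; exact hdiag b
      · exact hoff a b h
    rw [eq_top_iff]
    intro A _
    rw [Matrix.matrix_eq_sum_single A]
    apply sum_mem
    intro i _
    apply sum_mem
    intro j _
    have : Matrix.single i j (A i j) = (A i j) • E i j := by
      rw [E, Matrix.smul_single, smul_eq_mul, mul_one]
    rw [this]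
    exact L.smul_mem _ (hall i j)
end

section
/- Let n ≥ 1, let A ∈ Matrix (Fin n) (Fin n) ℝ, and let (i_1,j_1),…,(i_m,j_m) be pairs in Fin n (self-loops allowed). Let G*_contr be the digraph on Fin n with arc set {(i_1,j_1),…,(i_m,j_m)}, and let G*_drift be the digraph with an arc (i,j) exactly when A i j ≠ 0. Suppose: (a) within each weakly connected component of G*_contr every vertex is reachable from every other by a directed path in G*_contr; (b) every weakly connected component of G*_contr contains at least two vertices; and (c) some weakly connected component of G*_contr contains at least three vertices. Then the Lie subalgebra of Matrix (Fin n) (Fin n) ℝ generated by {A} ∪ {E i_1 j_1, …, E i_m j_m} equals ⊤ (all of Matrix (Fin n) (Fin n) ℝ) if and only if both: (i) the union digraph G*_drift ∪ G*_contr is strongly connected, and (ii) G*_contr has at least one self-loop (some i_k = j_k) or trace A ≠ 0. (This is the Lie algebra rank condition characterizing accessibility of the bilinear system with drift A on GL⁺(n).) -/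
open Matrix

attribute [local instance 100] LieRing.ofAssociativeRing

section Aux
variable {n : ℕ}

lemma GLn_E_mul_E (i j k l : Fin n) : E i j * E k l = if j = k then E i l else 0 := by
  rcases eq_or_ne j k with rfl | h
  · simp [E]
  · simp [E, Matrix.single_mul_single_of_ne (h := h), h]

lemma GLn_lie_E_E {a b : Fin n} (c : Fin n) (h : a ≠ b) : ⁅E a c, E c b⁆ = E a b := by
  rw [Ring.lie_def, GLn_E_mul_E, GLn_E_mul_E, if_pos rfl, if_neg (Ne.symm h), sub_zero]

lemma GLn_lie_E_diag {a u : Fin n} (h : a ≠ u) : ⁅E a u, E u a⁆ = E a a - E u u := by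
  rw [Ring.lie_def, GLn_E_mul_E, GLn_E_mul_E, if_pos rfl, if_pos rfl]

lemma GLn_E_mul_apply (s x : Fin n) (M : Matrix (Fin n) (Fin n) ℝ) (a b : Fin n) :
    (E s x * M) a b = if s = a then M x b else 0 := by
  rcases eq_or_ne s a with rfl | h
  · simp [E]
  · simp only [E]
    rw [Matrix.single_mul_apply_of_ne (c := 1) s x a b (Ne.symm h), if_neg h]

lemma GLn_mul_E_apply (y t : Fin n) (M : Matrix (Fin n) (Fin n) ℝ) (a b : Fin n) :
    (M * E y t) a b = if t = b then M a y else 0 := by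
  rcases eq_or_ne t b with rfl | h
  · simp [E]
  · simp only [E]
    rw [Matrix.mul_single_apply_of_ne (c := 1) y t a b (Ne.symm h), if_neg h]

lemma GLn_E_mul_M_mul_E (M : Matrix (Fin n) (Fin n) ℝ) (s x y t : Fin n) :
    E s x * M * E y t = M x y • E s t := by
  ext a b
  rw [GLn_mul_E_apply, GLn_E_mul_apply]
  simp only [Matrix.smul_apply, E, single, of_apply, smul_eq_mul]
  by_cases h1 : t = b <;> by_cases h2 : s = a <;> simp [h1, h2]

lemma GLn_KEY0 (M : Matrix (Fin n) (Fin n) ℝ) {s x y t : Fin n} (hst : s ≠ t) (hxy : x ≠ y) :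
    ⁅⁅E s x, M⁆, E y t⁆ = M x y • E s t + M t s • E y x := by
  have h1 : E s x * E y t = 0 := by rw [GLn_E_mul_E, if_neg hxy]
  have h2 : E y t * E s x = 0 := by rw [GLn_E_mul_E, if_neg (Ne.symm hst)]
  have expand : ⁅⁅E s x, M⁆, E y t⁆ =
      E s x * M * E y t - M * (E s x * E y t) - E y t * E s x * M + E y t * M * E s x := by
    simp only [Ring.lie_def]
    noncomm_ring
  rw [expand, h1, h2, mul_zero, zero_mul, GLn_E_mul_M_mul_E, GLn_E_mul_M_mul_E]
  abel

lemma GLn_lie_diagpair (a p q : Fin n) (hpq : p ≠ q) :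
    ⁅E a a, E p q⁆ = ((if a = p then (1:ℝ) else 0) - if a = q then 1 else 0) • E p q := by
  rw [Ring.lie_def, GLn_E_mul_E, GLn_E_mul_E]
  rcases eq_or_ne a p with rfl | h1 <;> rcases eq_or_ne a q with rfl | h2
  · exact absurd rfl hpq
  · simp [h2, Ne.symm h2]
  · simp [h1, Ne.symm h1]
  · simp [h1, h2, Ne.symm h1, Ne.symm h2]

lemma GLn_lie_diagdiff (a u p q : Fin n) (hpq : p ≠ q) :
    ⁅E a a - E u u, E p q⁆ =
      (((if a = p then (1:ℝ) else 0) - if a = q then 1 else 0) -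
        ((if u = p then 1 else 0) - if u = q then 1 else 0)) • E p q := by
  rw [sub_lie, GLn_lie_diagpair a p q hpq, GLn_lie_diagpair u p q hpq]
  simp only [sub_smul]

lemma GLn_KEY1 (M : Matrix (Fin n) (Fin n) ℝ) {a u x y t : Fin n}
    (hat : a ≠ t) (hax : a ≠ x) (hay : a ≠ y)
    (hua : u ≠ a) (hut : u ≠ t) (hux : u ≠ x) (huy : u ≠ y) (hxy : x ≠ y) :
    ⁅E a a - E u u, ⁅⁅E a x, M⁆, E y t⁆⁆ = M x y • E a t := by
  rw [GLn_KEY0 M hat hxy, lie_add, lie_smul, lie_smul,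
    GLn_lie_diagdiff a u a t hat, GLn_lie_diagdiff a u y x hxy.symm]
  simp [hat, hax, hay, hua, hut, hux, huy]

lemma GLn_KEY2 (M : Matrix (Fin n) (Fin n) ℝ) {d u s x y : Fin n}
    (hds : d ≠ s) (hdx : d ≠ x) (hdy : d ≠ y)
    (hus : u ≠ s) (hud : u ≠ d) (hux : u ≠ x) (huy : u ≠ y) (hxy : x ≠ y) :
    ⁅E d d - E u u, ⁅⁅E s x, M⁆, E y d⁆⁆ = -(M x y • E s d) := by
  rw [GLn_KEY0 M hds.symm hxy, lie_add, lie_smul, lie_smul,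
    GLn_lie_diagdiff d u s d hds.symm, GLn_lie_diagdiff d u y x hxy.symm]
  simp [hds, Ne.symm hds, hdx, hdy, hus, hud, hux, huy]

end Aux

/-- Two vertices are weakly connected if one is reachable from the other in the
symmetric closure of the adjacency relation. -/
def WeaklyConnected {V : Type*} (Adj : V → V → Prop) (u v : V) : Prop :=
  Relation.ReflTransGen (fun a b => Adj a b ∨ Adj b a) u v

/-- Lie algebra rank condition for the bilinear system with drift on `GL⁺(n)`:
under the stated assumptions on the weakly connected components of the controlled
interaction digraph, the generated Lie algebra is all of `gl(n, ℝ)` iff the union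
digraph is strongly connected, and the controlled digraph has a self-loop or the
drift has nonzero trace. -/
theorem GLn_accessibility_iff
    (n m : ℕ) (hn : 1 ≤ n)
    (A : Matrix (Fin n) (Fin n) ℝ)
    (ij : Fin m → Fin n × Fin n)
    (contrAdj driftAdj : Fin n → Fin n → Prop)
    (hcontr : contrAdj = fun a b => ∃ k, ij k = (a, b))
    (hdrift : driftAdj = fun a b => A a b ≠ 0)
    (ha : ∀ u v : Fin n, WeaklyConnected contrAdj u v → Relation.ReflTransGen contrAdj u v)
    (hb : ∀ v : Fin n, 2 ≤ {u : Fin n | WeaklyConnected contrAdj v u}.ncard)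
    (hc : ∃ v : Fin n, 3 ≤ {u : Fin n | WeaklyConnected contrAdj v u}.ncard) :
    LieSubalgebra.lieSpan ℝ (Matrix (Fin n) (Fin n) ℝ)
        ({A} ∪ Set.range fun k => E (ij k).1 (ij k).2) = ⊤ ↔
      (StronglyConnected (fun a b : Fin n => driftAdj a b ∨ contrAdj a b) ∧
        ((∃ k, (ij k).1 = (ij k).2) ∨ A.trace ≠ 0)) := by
  classical
  have hdrift' : ∀ a b : Fin n, driftAdj a b ↔ A a b ≠ 0 := by
    intro a b; rw [hdrift]
  have hcontr' : ∀ a b : Fin n, contrAdj a b ↔ ∃ k, ij k = (a, b) := by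
    intro a b; rw [hcontr]
  set L := LieSubalgebra.lieSpan ℝ (Matrix (Fin n) (Fin n) ℝ)
      ({A} ∪ Set.range fun k => E (ij k).1 (ij k).2) with hLdef
  constructor
  · -- Forward direction
    intro htop
    constructor
    · -- strong connectivity
      intro u v
      by_contra hreach
      set S : Set (Fin n) :=
        {w | Relation.ReflTransGen (fun a b => driftAdj a b ∨ contrAdj a b) u w} with hSdef
      let K : LieSubalgebra ℝ (Matrix (Fin n) (Fin n) ℝ) :=
        { carrier := {X : Matrix (Fin n) (Fin n) ℝ | ∀ a b, a ∈ S → b ∉ S → X a b = 0}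
          add_mem' := by
            intro x y hx hy a b haS hbS
            simp [Matrix.add_apply, hx a b haS hbS, hy a b haS hbS]
          zero_mem' := by intro a b _ _; rfl
          smul_mem' := by
            intro c x hx a b haS hbS
            simp [Matrix.smul_apply, hx a b haS hbS]
          lie_mem' := by
            intro x y hx hy a b haS hbS
            show (⁅x, y⁆ : Matrix (Fin n) (Fin n) ℝ) a b = 0
            rw [Ring.lie_def]
            simp only [Matrix.sub_apply, Matrix.mul_apply]
            rw [Finset.sum_eq_zero, Finset.sum_eq_zero, sub_zero]
            · intro c _
              by_cases hcS : c ∈ S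
              · rw [hx c b hcS hbS, mul_zero]
              · rw [hy a c haS hcS, zero_mul]
            · intro c _
              by_cases hcS : c ∈ S
              · rw [hy c b hcS hbS, mul_zero]
              · rw [hx a c haS hcS, zero_mul] }
      have hle : L ≤ K := by
        rw [hLdef]
        apply (LieSubalgebra.lieSpan_le).2
        rintro X (rfl | ⟨k, rfl⟩)
        · intro a b haS hbS
          by_contra hA0
          exact hbS (haS.tail (Or.inl ((hdrift' a b).2 hA0)))
        · intro a b haS hbS
          show Matrix.single (ij k).1 (ij k).2 (1:ℝ) a b = 0
          apply Matrix.single_apply_of_ne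
          rintro ⟨h1, h2⟩
          exact hbS (haS.tail (Or.inr ((hcontr' a b).2 ⟨k, Prod.ext h1 h2⟩)))
      have hEuv : E u v ∈ K := hle (by rw [htop]; exact LieSubalgebra.mem_top _)
      have h10 := hEuv u v Relation.ReflTransGen.refl hreach
      rw [show (E u v) u v = 1 from Matrix.single_apply_same u v 1] at h10
      exact one_ne_zero h10
    · -- loop or trace
      by_contra hcon
      push_neg at hcon
      obtain ⟨hloop, htr⟩ := hcon
      let K : LieSubalgebra ℝ (Matrix (Fin n) (Fin n) ℝ) :=
        { carrier := {X : Matrix (Fin n) (Fin n) ℝ | Matrix.trace X = 0}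
          add_mem' := by
            intro x y hx hy
            show Matrix.trace (x + y) = 0
            rw [Matrix.trace_add]
            rw [show Matrix.trace x = 0 from hx, show Matrix.trace y = 0 from hy, add_zero]
          zero_mem' := by show Matrix.trace (0 : Matrix (Fin n) (Fin n) ℝ) = 0; simp
          smul_mem' := by
            intro c x hx
            show Matrix.trace (c • x) = 0
            rw [Matrix.trace_smul, show Matrix.trace x = 0 from hx, smul_zero]
          lie_mem' := by
            intro x y hx hy
            show Matrix.trace ⁅x, y⁆ = 0
            rw [Ring.lie_def, Matrix.trace_sub, Matrix.trace_mul_comm, sub_self] }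
      have hle : L ≤ K := by
        rw [hLdef]
        apply (LieSubalgebra.lieSpan_le).2
        rintro X (rfl | ⟨k, rfl⟩)
        · exact htr
        · show Matrix.trace (E (ij k).1 (ij k).2) = 0
          exact Matrix.trace_single_eq_of_ne _ _ _ (fun h => hloop k h)
      have hc0 : Matrix.trace (E (⟨0, hn⟩ : Fin n) ⟨0, hn⟩) = 0 :=
        hle (by rw [htop]; exact LieSubalgebra.mem_top _)
      rw [show E (⟨0, hn⟩ : Fin n) ⟨0, hn⟩ = Matrix.single (⟨0, hn⟩ : Fin n) ⟨0, hn⟩ (1:ℝ) from rfl,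
        Matrix.trace_single_eq_same] at hc0
      exact one_ne_zero hc0
  · -- Backward direction
    rintro ⟨hsc, hstruct⟩
    have hAL : A ∈ L := LieSubalgebra.subset_lieSpan (Or.inl rfl)
    have hEgen : ∀ k, E (ij k).1 (ij k).2 ∈ L := fun k =>
      LieSubalgebra.subset_lieSpan (Or.inr ⟨k, rfl⟩)
    have hCadj : ∀ a b : Fin n, contrAdj a b → E a b ∈ L := by
      intro a b h
      obtain ⟨k, hk⟩ := (hcontr' a b).1 h
      have := hEgen k
      rw [hk] at this
      exact this
    -- weak connectivity basics
    have hWrefl : ∀ a : Fin n, WeaklyConnected contrAdj a a := fun a => Relation.ReflTransGen.refl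
    have hWsymm : ∀ {a b : Fin n}, WeaklyConnected contrAdj a b → WeaklyConnected contrAdj b a :=
      fun h => (@Relation.ReflTransGen.stdSymm _ _ ⟨fun _ _ hh => hh.symm⟩).symm _ _ h
    have hWtrans : ∀ {a b c : Fin n}, WeaklyConnected contrAdj a b →
        WeaklyConnected contrAdj b c → WeaklyConnected contrAdj a c :=
      fun h1 h2 => Relation.ReflTransGen.trans h1 h2
    have hWadj : ∀ a b : Fin n, contrAdj a b → WeaklyConnected contrAdj a b :=
      fun a b h => Relation.ReflTransGen.single (Or.inl h)
    have pathE : ∀ {a b : Fin n}, Relation.ReflTransGen contrAdj a b → a ≠ b → E a b ∈ L := by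
      intro a b h
      induction h with
      | refl => exact fun h' => absurd rfl h'
      | @tail c d hp hstep ih =>
        intro had
        rcases eq_or_ne c d with rfl | hcd
        · exact ih had
        · rcases eq_or_ne a c with rfl | hac
          · exact hCadj a d hstep
          · exact (GLn_lie_E_E c had) ▸ L.lie_mem (ih hac) (hCadj c d hstep)
    have hWpair : ∀ {a b : Fin n}, WeaklyConnected contrAdj a b → a ≠ b → E a b ∈ L :=
      fun h hne => pathE (ha _ _ h) hne
    obtain ⟨v0, hv3⟩ := hc
    have hMM : ∀ {a b : Fin n}, WeaklyConnected contrAdj v0 a → WeaklyConnected contrAdj v0 b →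
        a ≠ b → E a b ∈ L :=
      fun h1 h2 hne => hWpair (hWtrans (hWsymm h1) h2) hne
    have pick2 : ∀ v : Fin n, ∃ t, WeaklyConnected contrAdj v t ∧ t ≠ v := by
      intro v
      by_contra hno
      push_neg at hno
      have hsub : {u : Fin n | WeaklyConnected contrAdj v u} ⊆ {v} := fun u hu => hno u hu
      have h1 := (hb v).trans (Set.ncard_le_ncard hsub (Set.finite_singleton v))
      rw [Set.ncard_singleton] at h1
      omega
    have pick3 : ∀ a b : Fin n, ∃ u, WeaklyConnected contrAdj v0 u ∧ u ≠ a ∧ u ≠ b := by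
      intro a b
      by_contra hno
      push_neg at hno
      have hsub : {u : Fin n | WeaklyConnected contrAdj v0 u} ⊆ {a, b} := by
        intro u hu
        by_cases h : u = a
        · exact Set.mem_insert_iff.2 (Or.inl h)
        · exact Set.mem_insert_iff.2 (Or.inr (hno u hu h))
      have h1 := hv3.trans (Set.ncard_le_ncard hsub (Set.toFinite _))
      have h2 : ({a, b} : Set (Fin n)).ncard ≤ 2 := by
        refine (Set.ncard_insert_le a {b}).trans ?_
        rw [Set.ncard_singleton]
      omega
    have hdiagL : ∀ {a u : Fin n}, WeaklyConnected contrAdj v0 a → WeaklyConnected contrAdj v0 u →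
        a ≠ u → E a a - E u u ∈ L :=
      fun h1 h2 hne => (GLn_lie_E_diag hne) ▸ L.lie_mem (hMM h1 h2 hne) (hMM h2 h1 hne.symm)
    have hsmul : ∀ (c : ℝ) (X : Matrix (Fin n) (Fin n) ℝ), c ≠ 0 → c • X ∈ L → X ∈ L := by
      intro c X hc h
      have := L.smul_mem c⁻¹ h
      rwa [inv_smul_smul₀ hc] at this
    -- forward sweep
    have sweepF : ∀ w : Fin n,
        Relation.ReflTransGen (fun a b => driftAdj a b ∨ contrAdj a b) v0 w →
        ∀ b, WeaklyConnected contrAdj w b → ∀ a, WeaklyConnected contrAdj v0 a →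
        a ≠ b → E a b ∈ L := by
      intro w hw
      induction hw with
      | refl => exact fun b hbw a haM hne => hMM haM hbw hne
      | @tail x y hp hstep ih =>
        intro b hb a haM hne
        rcases hstep with hdr | hco
        · rw [hdrift' x y] at hdr
          by_cases hxyW : WeaklyConnected contrAdj x y
          · exact ih b (hWtrans hxyW hb) a haM hne
          · by_cases hyM : WeaklyConnected contrAdj v0 y
            · exact hMM haM (hWtrans hyM hb) hne
            · have hxy : x ≠ y := fun h => hxyW (h ▸ hWrefl x)
              obtain ⟨a0, ha0M, ha0x, hEa0x⟩ : ∃ a0, WeaklyConnected contrAdj v0 a0 ∧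
                  a0 ≠ x ∧ E a0 x ∈ L := by
                by_cases hxM : WeaklyConnected contrAdj v0 x
                · obtain ⟨u, huM, hux, -⟩ := pick3 x x
                  exact ⟨u, huM, hux, hMM huM hxM hux⟩
                · have hvx : v0 ≠ x := fun h => hxM (h ▸ hWrefl v0)
                  exact ⟨v0, hWrefl v0, hvx, ih x (hWrefl x) v0 (hWrefl v0) hvx⟩
              obtain ⟨t, hyt, hty⟩ := pick2 y
              have htnM : ¬ WeaklyConnected contrAdj v0 t :=
                fun h => hyM (hWtrans h (hWsymm hyt))
              have htx : t ≠ x := fun h => hxyW (hWsymm (h ▸ hyt))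
              obtain ⟨u, huM, hua0, hux⟩ := pick3 a0 x
              have ha0t : a0 ≠ t := fun h => htnM (h ▸ ha0M)
              have ha0y : a0 ≠ y := fun h => hyM (h ▸ ha0M)
              have hut : u ≠ t := fun h => htnM (h ▸ huM)
              have huy : u ≠ y := fun h => hyM (h ▸ huM)
              have hEyt : E y t ∈ L := hWpair hyt hty.symm
              have hH : E a0 a0 - E u u ∈ L := hdiagL ha0M huM (Ne.symm hua0)
              have hD : ⁅E a0 a0 - E u u, ⁅⁅E a0 x, A⁆, E y t⁆⁆ ∈ L :=
                L.lie_mem hH (L.lie_mem (L.lie_mem hEa0x hAL) hEyt)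
              rw [GLn_KEY1 A ha0t ha0x ha0y hua0 hut hux huy hxy] at hD
              have hEa0t : E a0 t ∈ L := hsmul _ _ hdr hD
              have hat : a ≠ t := fun h => htnM (h ▸ haM)
              have hEat : E a t ∈ L := by
                rcases eq_or_ne a a0 with rfl | hne2
                · exact hEa0t
                · exact (GLn_lie_E_E a0 hat) ▸ L.lie_mem (hMM haM ha0M hne2) hEa0t
              rcases eq_or_ne t b with rfl | htb
              · exact hEat
              · have hWtb : WeaklyConnected contrAdj t b := hWtrans (hWsymm hyt) hb
                exact (GLn_lie_E_E t hne) ▸ L.lie_mem hEat (hWpair hWtb htb)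
        · exact ih b (hWtrans (hWadj x y hco) hb) a haM hne
    -- backward sweep
    have sweepB : ∀ w : Fin n,
        Relation.ReflTransGen (fun a b => driftAdj a b ∨ contrAdj a b) w v0 →
        ∀ s, WeaklyConnected contrAdj w s → ∀ d, WeaklyConnected contrAdj v0 d →
        s ≠ d → E s d ∈ L := by
      intro w hw
      induction hw using Relation.ReflTransGen.head_induction_on with
      | refl => exact fun s hs d hdM hne => hMM hs hdM hne
      | @head x y hstep hp ih =>
        intro s hs d hdM hne
        rcases hstep with hdr | hco
        · rw [hdrift' x y] at hdr
          by_cases hxyW : WeaklyConnected contrAdj x y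
          · exact ih s (hWtrans (hWsymm hxyW) hs) d hdM hne
          · by_cases hxM : WeaklyConnected contrAdj v0 x
            · exact hMM (hWtrans hxM hs) hdM hne
            · have hxy : x ≠ y := fun h => hxyW (h ▸ hWrefl x)
              have hsnM : ¬ WeaklyConnected contrAdj v0 s :=
                fun h => hxM (hWtrans h (hWsymm hs))
              obtain ⟨d0, hd0M, hyd0, hEyd0⟩ : ∃ d0, WeaklyConnected contrAdj v0 d0 ∧
                  y ≠ d0 ∧ E y d0 ∈ L := by
                by_cases hyM : WeaklyConnected contrAdj v0 y
                · obtain ⟨u, huM, huy, -⟩ := pick3 y y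
                  exact ⟨u, huM, fun h => huy h.symm, hMM hyM huM (fun h => huy h.symm)⟩
                · have hyv : y ≠ v0 := fun h => hyM (h ▸ hWrefl v0)
                  exact ⟨v0, hWrefl v0, hyv, ih y (hWrefl y) v0 (hWrefl v0) hyv⟩
              obtain ⟨s0, hxs0, hs0x⟩ := pick2 x
              have hs0nM : ¬ WeaklyConnected contrAdj v0 s0 :=
                fun h => hxM (hWtrans h (hWsymm hxs0))
              have hs0y : s0 ≠ y := fun h => hxyW (h ▸ hxs0)
              obtain ⟨u, huM, hud0, huy⟩ := pick3 d0 y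
              have hus0 : u ≠ s0 := fun h => hs0nM (h ▸ huM)
              have hux : u ≠ x := fun h => hxM (h ▸ huM)
              have hd0s0 : d0 ≠ s0 := fun h => hs0nM (h ▸ hd0M)
              have hd0x : d0 ≠ x := fun h => hxM (h ▸ hd0M)
              have hd0y : d0 ≠ y := Ne.symm hyd0
              have hEs0x : E s0 x ∈ L := hWpair (hWsymm hxs0) hs0x
              have hH : E d0 d0 - E u u ∈ L := hdiagL hd0M huM (Ne.symm hud0)
              have hD : ⁅E d0 d0 - E u u, ⁅⁅E s0 x, A⁆, E y d0⁆⁆ ∈ L :=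
                L.lie_mem hH (L.lie_mem (L.lie_mem hEs0x hAL) hEyd0)
              rw [GLn_KEY2 A hd0s0 hd0x hd0y hus0 hud0 hux huy hxy] at hD
              have hD2 : A x y • E s0 d0 ∈ L := by
                have := neg_mem hD
                rwa [neg_neg] at this
              have hEs0d0 : E s0 d0 ∈ L := hsmul _ _ hdr hD2
              have hsd0 : s ≠ d0 := fun h => hsnM (h ▸ hd0M)
              have hEsd0 : E s d0 ∈ L := by
                rcases eq_or_ne s s0 with rfl | hne2
                · exact hEs0d0
                · have hWss0 : WeaklyConnected contrAdj s s0 := hWtrans (hWsymm hs) hxs0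
                  exact (GLn_lie_E_E s0 hsd0) ▸ L.lie_mem (hWpair hWss0 hne2) hEs0d0
              rcases eq_or_ne d0 d with rfl | h3
              · exact hEsd0
              · exact (GLn_lie_E_E d0 hne) ▸ L.lie_mem hEsd0 (hMM hd0M hdM h3)
        · exact ih s (hWtrans (hWsymm (hWadj x y hco)) hs) d hdM hne
    -- all off-diagonal elementary matrices
    have hallE : ∀ a b : Fin n, a ≠ b → E a b ∈ L := by
      intro a b hne
      by_cases haM : WeaklyConnected contrAdj v0 a
      · exact sweepF b (hsc v0 b) b (hWrefl b) a haM hne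
      · by_cases hbM : WeaklyConnected contrAdj v0 b
        · exact sweepB a (hsc a v0) a (hWrefl a) b hbM hne
        · have hav : a ≠ v0 := fun h => haM (h ▸ hWrefl v0)
          have hvb : v0 ≠ b := fun h => hbM (h ▸ hWrefl v0)
          have h1 : E a v0 ∈ L := sweepB a (hsc a v0) a (hWrefl a) v0 (hWrefl v0) hav
          have h2 : E v0 b ∈ L := sweepF b (hsc v0 b) b (hWrefl b) v0 (hWrefl v0) hvb
          exact (GLn_lie_E_E v0 hne) ▸ L.lie_mem h1 h2
    have hdiffL : ∀ a b : Fin n, E a a - E b b ∈ L := by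
      intro a b
      rcases eq_or_ne a b with rfl | hne
      · simpa using L.zero_mem
      · exact (GLn_lie_E_diag hne) ▸ L.lie_mem (hallE a b hne) (hallE b a hne.symm)
    have htrace_def : A.trace = ∑ a, A a a := by simp [Matrix.trace, Matrix.diag]
    have hA : A = ∑ a : Fin n, ∑ b : Fin n, A a b • E a b := by
      conv_lhs => rw [matrix_eq_sum_single A]
      refine Finset.sum_congr rfl fun a _ => Finset.sum_congr rfl fun b _ => ?_
      rw [show E a b = Matrix.single a b (1:ℝ) from rfl, smul_single,
        smul_eq_mul, mul_one]
    have hEcc : ∃ c : Fin n, E c c ∈ L := by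
      rcases hstruct with ⟨k, hk⟩ | htr
      · refine ⟨(ij k).1, ?_⟩
        have := hEgen k
        rwa [← hk] at this
      · set c0 : Fin n := ⟨0, hn⟩ with hc0def
        have hZeq : A - ∑ a : Fin n, ∑ b : Fin n,
            (if a = b then A a a • (E a a - E c0 c0) else A a b • E a b)
            = A.trace • E c0 c0 := by
          have hsplit : ∀ a b : Fin n,
              (if a = b then A a a • (E a a - E c0 c0) else A a b • E a b)
              = A a b • E a b - (if a = b then A a a • E c0 c0 else 0) := by
            intro a b
            by_cases h : a = b
            · subst h; rw [if_pos rfl, if_pos rfl, smul_sub]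
            · rw [if_neg h, if_neg h, sub_zero]
          simp only [hsplit, Finset.sum_sub_distrib]
          rw [← hA]
          have hsum2 : ∑ a : Fin n, ∑ b : Fin n, (if a = b then A a a • E c0 c0 else 0)
              = A.trace • E c0 c0 := by
            rw [htrace_def, Finset.sum_smul]
            refine Finset.sum_congr rfl fun a _ => ?_
            simp
          rw [hsum2]
          abel
        have hZL : A - ∑ a : Fin n, ∑ b : Fin n,
            (if a = b then A a a • (E a a - E c0 c0) else A a b • E a b) ∈ L := by
          refine sub_mem hAL (sum_mem fun a _ => sum_mem fun b _ => ?_)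
          by_cases h : a = b
          · rw [if_pos h]
            exact L.smul_mem _ (hdiffL a c0)
          · rw [if_neg h]
            exact L.smul_mem _ (hallE a b h)
        rw [hZeq] at hZL
        exact ⟨c0, hsmul _ _ htr hZL⟩
    obtain ⟨c, hcc⟩ := hEcc
    have hallE2 : ∀ a b : Fin n, E a b ∈ L := by
      intro a b
      rcases eq_or_ne a b with rfl | h
      · have := add_mem (hdiffL a c) hcc
        rwa [sub_add_cancel] at this
      · exact hallE a b h
    rw [eq_top_iff]
    intro X _
    rw [matrix_eq_sum_single X]
    refine sum_mem fun a _ => sum_mem fun b _ => ?_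
    have := L.smul_mem (X a b) (hallE2 a b)
    rwa [show E a b = Matrix.single a b (1:ℝ) from rfl, smul_single,
      smul_eq_mul, mul_one] at this
end

section
/- Let V be a finite nonempty vertex type and G a simple graph on V. Define the transitive closure mapping M sending a simple graph H to the simple graph M(H) with adjacency: i and k are adjacent in M(H) iff i ≠ k and (they are adjacent in H, or there exists j with {i,j} and {j,k} edges of H). Then G is connected if and only if there exists a positive integer z such that the z-fold iterate M^z(G) is the complete graph (⊤ : SimpleGraph V). -/
/-- The graph transitive closure mapping `M`: vertices `i` and `k` are adjacent in
`M(H)` iff `i ≠ k` and either they are adjacent in `H`, or there is a common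
neighbor `j`. -/
def M {V : Type*} (H : SimpleGraph V) : SimpleGraph V where
  Adj i k := i ≠ k ∧ (H.Adj i k ∨ ∃ j, H.Adj i j ∧ H.Adj j k)
  symm := by
    constructor
    intro i k h
    obtain ⟨hne, h⟩ := h
    refine ⟨hne.symm, ?_⟩
    rcases h with h | ⟨j, h1, h2⟩
    · exact Or.inl h.symm
    · exact Or.inr ⟨j, h2.symm, h1.symm⟩
  loopless := ⟨fun i h => h.1 rfl⟩

/-- Split a walk at position `m`. -/
lemma walk_split {V : Type*} {G : SimpleGraph V} :
    ∀ {i k : V} (p : G.Walk i k) (m : ℕ),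
      ∃ (j : V) (q : G.Walk i j) (r : G.Walk j k),
        q.length = min m p.length ∧ q.length + r.length = p.length := by
  intro i k p
  induction p with
  | nil => intro m; exact ⟨_, .nil, .nil, by simp, by simp⟩
  | cons h p ih =>
    intro m
    cases m with
    | zero => exact ⟨_, .nil, .cons h p, by simp, by simp⟩
    | succ m =>
      obtain ⟨j, q, r, hq, hqr⟩ := ih m
      exact ⟨j, q.cons h, r, by simpa [Nat.succ_min_succ] using hq,
        by simp [Nat.succ_add, hqr]⟩

lemma adj_of_walk {V : Type*} {G : SimpleGraph V} :
    ∀ (z : ℕ) (i k : V), i ≠ k → (∃ p : G.Walk i k, p.length ≤ 2 ^ z) →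
      (M^[z] G).Adj i k := by
  intro z
  induction z with
  | zero =>
    rintro i k hne ⟨p, hp⟩
    cases p with
    | nil => exact absurd rfl hne
    | cons h p =>
      simp only [SimpleGraph.Walk.length_cons, pow_zero] at hp
      have : p.length = 0 := by omega
      have := p.eq_of_length_eq_zero this
      subst this
      simpa using h
  | succ z ih =>
    rintro i k hne ⟨p, hp⟩
    rw [Function.iterate_succ_apply']
    by_cases hle : p.length ≤ 2 ^ z
    · exact ⟨hne, Or.inl (ih i k hne ⟨p, hle⟩)⟩
    · push_neg at hle
      obtain ⟨j, q, r, hq, hqr⟩ := walk_split p (2 ^ z)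
      have hqlen : q.length = 2 ^ z := by rw [hq]; exact min_eq_left hle.le
      have hrlen : r.length ≤ 2 ^ z := by
        have : 2 ^ (z + 1) = 2 ^ z + 2 ^ z := by ring
        omega
      by_cases hij : i = j
      · subst hij
        exact ⟨hne, Or.inl (ih i k hne ⟨r, hrlen⟩)⟩
      · by_cases hjk : j = k
        · subst hjk
          exact ⟨hne, Or.inl (ih i j hij ⟨q, hqlen.le⟩)⟩
        · exact ⟨hne, Or.inr ⟨j, ih i j hij ⟨q, hqlen.le⟩, ih j k hjk ⟨r, hrlen⟩⟩⟩

lemma reachable_of_iterate_adj {V : Type*} {G : SimpleGraph V} :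
    ∀ (z : ℕ) (i k : V), (M^[z] G).Adj i k → G.Reachable i k := by
  intro z
  induction z with
  | zero => exact fun i k h => h.reachable
  | succ z ih =>
    intro i k h
    rw [Function.iterate_succ_apply'] at h
    obtain ⟨-, h | ⟨j, h1, h2⟩⟩ := h
    · exact ih i k h
    · exact (ih i j h1).trans (ih j k h2)

/-- A simple graph on a finite nonempty vertex type is connected iff some positive
iterate of the transitive closure mapping `M` is the complete graph. -/
theorem connected_iff_iterate_M_eq_top
    {V : Type*} [Fintype V] [Nonempty V] (G : SimpleGraph V) :
    G.Connected ↔ ∃ z : ℕ, 0 < z ∧ M^[z] G = ⊤ := by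
  classical
  constructor
  · intro hG
    refine ⟨Fintype.card V, Fintype.card_pos, ?_⟩
    ext i k
    simp only [SimpleGraph.top_adj]
    constructor
    · exact fun h => h.ne
    · intro hne
      obtain ⟨p⟩ := hG.preconnected i k
      refine adj_of_walk _ i k hne ⟨p.toPath, ?_⟩
      have h1 : (p.toPath : G.Walk i k).length < Fintype.card V :=
        SimpleGraph.Walk.IsPath.length_lt p.toPath.2
      have h2 : Fintype.card V ≤ 2 ^ Fintype.card V := (Nat.lt_two_pow_self (n := Fintype.card V)).le
      omega
  · rintro ⟨z, -, h⟩
    refine ⟨fun i k => ?_⟩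
    by_cases hik : i = k
    · exact hik ▸ SimpleGraph.Reachable.refl i
    · exact reachable_of_iterate_adj z i k (by rw [h]; exact hik)
end

section
/- Let X and Y be disjoint finite sets of vertices with |X| ≥ 3 and |Y| ≥ 3, and let G be a simple graph on V = X ∪ Y all of whose edges join a vertex of X to a vertex of Y (a bi-graph with parts X and Y), with at least one edge. Then there exist an integer z ≥ 1 and a finite sequence of vertex pairs (i_1,j_1),…,(i_z,j_z) with i_s ≠ j_s such that: (i) for each s, either both i_s, j_s ∈ X or both i_s, j_s ∈ Y; and (ii) the iterated circumjacent closure H_{i_z j_z}(⋯ H_{i_2 j_2}(H_{i_1 j_1}(G)) ⋯) is again a graph all of whose edges join X to Y, and it has exactly one edge. -/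
/-- The circumjacent closure of a simple graph `G` at a pair of vertices `i, j`:
its edges are exactly `{i, x}` for `x` a neighbor of `j`, and `{j, x}` for `x` a
neighbor of `i` (with a guard `a ≠ b` ensuring irreflexivity; when `{i, j}` is not an
edge of `G` this guard is automatic). -/
def circClosure {V : Type*} (G : SimpleGraph V) (i j : V) : SimpleGraph V where
  Adj a b := a ≠ b ∧
    ((a = i ∧ G.Adj j b) ∨ (b = i ∧ G.Adj j a) ∨ (a = j ∧ G.Adj i b) ∨ (b = j ∧ G.Adj i a))
  symm := by
    constructor
    intro a b h
    obtain ⟨hne, h⟩ := h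
    exact ⟨hne.symm, by tauto⟩
  loopless := ⟨fun a h => h.1 rfl⟩

/-- A graph is a bi-graph with parts `X` and `Y` if every edge joins a vertex of `X`
to a vertex of `Y`. -/
def IsBigraph {V : Type*} (G : SimpleGraph V) (X Y : Set V) : Prop :=
  ∀ a b : V, G.Adj a b → (a ∈ X ∧ b ∈ Y) ∨ (a ∈ Y ∧ b ∈ X)

lemma circClosure_adj {V : Type*} (G : SimpleGraph V) (i j a b : V) :
    (circClosure G i j).Adj a b ↔ a ≠ b ∧
      ((a = i ∧ G.Adj j b) ∨ (b = i ∧ G.Adj j a) ∨ (a = j ∧ G.Adj i b) ∨ (b = j ∧ G.Adj i a)) :=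
  Iff.rfl

lemma exists_two_more {V : Type*} [Fintype V] {S : Set V} {u : V} (hu : u ∈ S)
    (h3 : 3 ≤ S.ncard) : ∃ j ∈ S, ∃ k ∈ S, j ≠ u ∧ k ≠ u ∧ j ≠ k := by
  have hfin : S.Finite := Set.toFinite S
  have hcard := Set.ncard_diff_singleton_add_one hu hfin
  have h2 : 1 < (S \ {u}).ncard := by omega
  rw [Set.one_lt_ncard_iff (hfin.diff : (S \ {u}).Finite)] at h2
  obtain ⟨j, k, hj, hk, hjk⟩ := h2
  exact ⟨j, hj.1, k, hk.1, hj.2, hk.2, hjk⟩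

/-- For a bi-graph with parts of size at least three and at least one edge, there is a
nonempty finite sequence of vertex pairs, each pair lying within a single part, such
that the iterated circumjacent closure along this sequence is again a bi-graph with
exactly one edge. -/
theorem bigraph_reduction_to_single_edge
    {V : Type*} [Fintype V] (X Y : Set V) (G : SimpleGraph V)
    (hdisj : Disjoint X Y) (hunion : X ∪ Y = Set.univ)
    (hX : 3 ≤ X.ncard) (hY : 3 ≤ Y.ncard)
    (hbi : IsBigraph G X Y) (hedge : 1 ≤ G.edgeSet.ncard) :
    ∃ L : List (V × V), L ≠ [] ∧
      (∀ p ∈ L, p.1 ≠ p.2 ∧ ((p.1 ∈ X ∧ p.2 ∈ X) ∨ (p.1 ∈ Y ∧ p.2 ∈ Y))) ∧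
      IsBigraph (L.foldl (fun H p => circClosure H p.1 p.2) G) X Y ∧
      (L.foldl (fun H p => circClosure H p.1 p.2) G).edgeSet.ncard = 1 := by
  -- basic consequences of disjointness and the bigraph property
  have hXY : ∀ a ∈ X, ∀ b ∈ Y, a ≠ b := by
    intro a ha b hb h
    exact (hdisj.ne_of_mem ha hb) h
  have hAdjY : ∀ a ∈ X, ∀ b, G.Adj a b → b ∈ Y := by
    intro a ha b h
    rcases hbi a b h with ⟨_, hb⟩ | ⟨ha', _⟩
    · exact hb
    · exact absurd rfl (hXY a ha a ha')
  have hnoXX : ∀ a ∈ X, ∀ b ∈ X, ¬ G.Adj a b := by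
    intro a ha b hb h
    exact absurd rfl (hXY b hb b (hAdjY a ha b h))
  -- pick an edge (u, v) with u ∈ X, v ∈ Y
  have hne : G.edgeSet.Nonempty := by
    rw [← Set.ncard_pos (Set.toFinite _)]; omega
  obtain ⟨e, he⟩ := hne
  induction e using Sym2.ind with
  | _ u₀ v₀ =>
  rw [SimpleGraph.mem_edgeSet] at he
  obtain ⟨u, v, hu, hv, huv⟩ : ∃ u v, u ∈ X ∧ v ∈ Y ∧ G.Adj u v := by
    rcases hbi u₀ v₀ he with ⟨h1, h2⟩ | ⟨h1, h2⟩
    · exact ⟨u₀, v₀, h1, h2, he⟩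
    · exact ⟨v₀, u₀, h2, h1, he.symm⟩
  -- pick j, k ∈ X distinct from u and each other; t, r ∈ Y distinct from v and each other
  obtain ⟨j, hj, k, hk, hju, hku, hjk⟩ := exists_two_more hu hX
  obtain ⟨t, ht, r, hr, htv, hrv, htr⟩ := exists_two_more hv hY
  -- names for iterated closures
  set G1 := circClosure G u j with hG1
  set G2 := circClosure G1 k j with hG2
  set G3 := circClosure G2 v t with hG3
  set G4 := circClosure G3 t r with hG4
  -- step 1: neighbors of j in G1 are exactly the G-neighbors of u
  have h1j : ∀ b, G1.Adj j b ↔ G.Adj u b := by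
    intro b
    rw [hG1, circClosure_adj]
    constructor
    · rintro ⟨hne, (⟨h, _⟩ | ⟨_, h⟩ | ⟨_, h⟩ | ⟨_, h⟩)⟩
      · exact absurd h hju
      · exact absurd h (G.loopless.irrefl j)
      · exact h
      · exact absurd h (hnoXX u hu j hj)
    · intro h
      exact ⟨hXY j hj b (hAdjY u hu b h), Or.inr (Or.inr (Or.inl ⟨rfl, h⟩))⟩
  have h1k : ∀ b, ¬ G1.Adj k b := by
    intro b h
    rw [hG1, circClosure_adj] at h
    rcases h with ⟨hne, (⟨h, _⟩ | ⟨_, h⟩ | ⟨h, _⟩ | ⟨_, h⟩)⟩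
    · exact hku h
    · exact hnoXX j hj k hk h
    · exact hjk h.symm
    · exact hnoXX u hu k hk h
  -- step 2: G2 is a star from k to the G-neighbors of u
  have h2 : ∀ a b, G2.Adj a b ↔ ((a = k ∧ G.Adj u b) ∨ (b = k ∧ G.Adj u a)) := by
    intro a b
    rw [hG2, circClosure_adj]
    constructor
    · rintro ⟨hne, (⟨h, h'⟩ | ⟨h, h'⟩ | ⟨_, h'⟩ | ⟨_, h'⟩)⟩
      · exact Or.inl ⟨h, (h1j b).1 h'⟩
      · exact Or.inr ⟨h, (h1j a).1 h'⟩
      · exact absurd h' (h1k b)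
      · exact absurd h' (h1k a)
    · rintro (⟨ha, h⟩ | ⟨hb, h⟩)
      · exact ⟨ha ▸ hXY k hk b (hAdjY u hu b h), Or.inl ⟨ha, (h1j b).2 h⟩⟩
      · exact ⟨hb ▸ (hXY k hk a (hAdjY u hu a h)).symm, Or.inr (Or.inl ⟨hb, (h1j a).2 h⟩)⟩
  -- step 3
  have h3 : ∀ a b, G3.Adj a b ↔
      ((a = v ∧ b = k ∧ G.Adj u t) ∨ (b = v ∧ a = k ∧ G.Adj u t) ∨
       (a = t ∧ b = k) ∨ (b = t ∧ a = k)) := by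
    intro a b
    have htk : t ≠ k := (hXY k hk t ht).symm
    have hvk : v ≠ k := (hXY k hk v hv).symm
    rw [hG3, circClosure_adj]
    constructor
    · rintro ⟨hne, (⟨h, h'⟩ | ⟨h, h'⟩ | ⟨h, h'⟩ | ⟨h, h'⟩)⟩
      · rcases (h2 t b).1 h' with ⟨h1, _⟩ | ⟨h1, h1'⟩
        · exact absurd h1 htk
        · exact Or.inl ⟨h, h1, h1'⟩
      · rcases (h2 t a).1 h' with ⟨h1, _⟩ | ⟨h1, h1'⟩
        · exact absurd h1 htk
        · exact Or.inr (Or.inl ⟨h, h1, h1'⟩)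
      · rcases (h2 v b).1 h' with ⟨h1, _⟩ | ⟨h1, _⟩
        · exact absurd h1 hvk
        · exact Or.inr (Or.inr (Or.inl ⟨h, h1⟩))
      · rcases (h2 v a).1 h' with ⟨h1, _⟩ | ⟨h1, _⟩
        · exact absurd h1 hvk
        · exact Or.inr (Or.inr (Or.inr ⟨h, h1⟩))
    · rintro (⟨ha, hb, h⟩ | ⟨hb, ha, h⟩ | ⟨ha, hb⟩ | ⟨hb, ha⟩)
      · exact ⟨ha ▸ hb ▸ hvk, Or.inl ⟨ha, (h2 t b).2 (Or.inr ⟨hb, h⟩)⟩⟩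
      · exact ⟨ha ▸ hb ▸ hvk.symm, Or.inr (Or.inl ⟨hb, (h2 t a).2 (Or.inr ⟨ha, h⟩)⟩)⟩
      · exact ⟨ha ▸ hb ▸ htk, Or.inr (Or.inr (Or.inl ⟨ha, (h2 v b).2 (Or.inr ⟨hb, huv⟩)⟩))⟩
      · exact ⟨ha ▸ hb ▸ htk.symm, Or.inr (Or.inr (Or.inr ⟨hb, (h2 v a).2 (Or.inr ⟨ha, huv⟩)⟩))⟩
  -- step 4: G4 has exactly the edge {k, r}
  have hrk : r ≠ k := (hXY k hk r hr).symm
  have h3r : ∀ b, ¬ G3.Adj r b := by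
    intro b h
    rcases (h3 r b).1 h with ⟨h1, _⟩ | ⟨_, h1, _⟩ | ⟨h1, _⟩ | ⟨_, h1⟩
    · exact hrv h1
    · exact hrk h1
    · exact htr h1.symm
    · exact hrk h1
  have h3t : ∀ b, G3.Adj t b ↔ b = k := by
    intro b
    rw [h3]
    constructor
    · rintro (⟨h1, _⟩ | ⟨_, h1, _⟩ | ⟨_, h1⟩ | ⟨h1, h2'⟩)
      · exact absurd h1 htv
      · exact absurd h1 (hXY k hk t ht).symm
      · exact h1
      · exact absurd h2' (hXY k hk t ht).symm
    · intro h
      exact Or.inr (Or.inr (Or.inl ⟨rfl, h⟩))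
  have h4 : ∀ a b, G4.Adj a b ↔ ((a = r ∧ b = k) ∨ (a = k ∧ b = r)) := by
    intro a b
    rw [hG4, circClosure_adj]
    constructor
    · rintro ⟨hne, (⟨_, h'⟩ | ⟨_, h'⟩ | ⟨ha, h'⟩ | ⟨hb, h'⟩)⟩
      · exact absurd h' (h3r b)
      · exact absurd h' (h3r a)
      · exact Or.inl ⟨ha, (h3t b).1 h'⟩
      · exact Or.inr ⟨(h3t a).1 h', hb⟩
    · rintro (⟨ha, hb⟩ | ⟨ha, hb⟩)
      · exact ⟨ha ▸ hb ▸ hrk, Or.inr (Or.inr (Or.inl ⟨ha, (h3t b).2 hb⟩))⟩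
      · exact ⟨ha ▸ hb ▸ hrk.symm, Or.inr (Or.inr (Or.inr ⟨hb, (h3t a).2 ha⟩))⟩
  -- assemble
  refine ⟨[(u, j), (k, j), (v, t), (t, r)], by simp, ?_, ?_, ?_⟩
  · intro p hp
    simp only [List.mem_cons, List.not_mem_nil, or_false] at hp
    rcases hp with rfl | rfl | rfl | rfl
    · exact ⟨Ne.symm hju, Or.inl ⟨hu, hj⟩⟩
    · exact ⟨Ne.symm hjk, Or.inl ⟨hk, hj⟩⟩
    · exact ⟨Ne.symm htv, Or.inr ⟨hv, ht⟩⟩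
    · exact ⟨htr, Or.inr ⟨ht, hr⟩⟩
  · intro a b h
    simp only [List.foldl] at h
    rw [← hG1, ← hG2, ← hG3, ← hG4] at h
    rcases (h4 a b).1 h with ⟨rfl, rfl⟩ | ⟨rfl, rfl⟩
    · exact Or.inr ⟨hr, hk⟩
    · exact Or.inl ⟨hk, hr⟩
  · have hset : (List.foldl (fun H p => circClosure H p.1 p.2) G
        [(u, j), (k, j), (v, t), (t, r)]).edgeSet = {s(r, k)} := by
      simp only [List.foldl]
      rw [← hG1, ← hG2, ← hG3, ← hG4]
      ext e
      induction e using Sym2.ind with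
      | _ a b =>
        rw [SimpleGraph.mem_edgeSet, h4, Set.mem_singleton_iff, Sym2.eq_iff]
    rw [hset, Set.ncard_singleton]
end

section
/- Let V be a finite nonempty vertex type and G a simple digraph on V (an irreflexive relation). Define the simple digraph transitive closure mapping M sending a simple digraph H to the simple digraph M(H) with arcs: (i,k) is an arc of M(H) iff i ≠ k and ((i,k) is an arc of H, or there exists j with (i,j) and (j,k) arcs of H). Then there exists a positive integer z such that the z-fold iterate M^z(G) is the simple complete digraph (arc set { (i,k) : i ≠ k }) if and only if G is strongly connected. -/
/-- The simple digraph transitive closure mapping `M`: `(i, k)` is an arc of `M(H)`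
iff `i ≠ k` and either `(i, k)` is an arc of `H` or there is `j` with `(i, j)` and
`(j, k)` arcs of `H`. -/
def Md {V : Type*} (H : V → V → Prop) : V → V → Prop :=
  fun i k => i ≠ k ∧ (H i k ∨ ∃ j, H i j ∧ H j k)

/-- Paths of exact length `n`. -/
def pathLen {V : Type*} (G : V → V → Prop) : ℕ → V → V → Prop
  | 0 => fun i k => i = k
  | n + 1 => fun i k => ∃ j, G i j ∧ pathLen G n j k

lemma pathLen_trans {V : Type*} {G : V → V → Prop} :
    ∀ {a b : ℕ} {i j k : V}, pathLen G a i j → pathLen G b j k → pathLen G (a + b) i k := by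
  intro a
  induction a with
  | zero => intro b i j k h1 h2; cases h1; simpa using h2
  | succ a ih =>
      intro b i j k h1 h2
      obtain ⟨j', hj', hp⟩ := h1
      have : pathLen G (a + b) j' k := ih hp h2
      exact (by rw [Nat.succ_add]; exact ⟨j', hj', this⟩)

lemma pathLen_split {V : Type*} {G : V → V → Prop} :
    ∀ {n : ℕ} {i k : V}, pathLen G n i k → ∀ a ≤ n,
      ∃ j, pathLen G a i j ∧ pathLen G (n - a) j k := by
  intro n
  induction n with
  | zero =>
      intro i k h a ha
      interval_cases a
      exact ⟨i, rfl, h⟩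
  | succ n ih =>
      intro i k h a ha
      obtain ⟨j0, hj0, hp⟩ := h
      cases a with
      | zero => exact ⟨i, rfl, ⟨j0, hj0, hp⟩⟩
      | succ a =>
          obtain ⟨j, h1, h2⟩ := ih hp a (by omega)
          refine ⟨j, ⟨j0, hj0, h1⟩, ?_⟩
          simpa [Nat.succ_sub_succ] using h2

lemma pathLen_toRTG {V : Type*} {G : V → V → Prop} :
    ∀ {n : ℕ} {i k : V}, pathLen G n i k → Relation.ReflTransGen G i k := by
  intro n
  induction n with
  | zero => intro i k h; cases h; rfl
  | succ n ih =>
      intro i k h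
      obtain ⟨j, hj, hp⟩ := h
      exact Relation.ReflTransGen.head hj (ih hp)

lemma RTG_toPathLen {V : Type*} {G : V → V → Prop} {i k : V}
    (h : Relation.ReflTransGen G i k) : ∃ n, pathLen G n i k := by
  induction h with
  | refl => exact ⟨0, rfl⟩
  | tail _ hbc ih =>
      obtain ⟨n, hn⟩ := ih
      exact ⟨n + 1, pathLen_trans hn ⟨_, hbc, rfl⟩⟩

lemma pathLen_shorten {V : Type*} [Fintype V] {G : V → V → Prop} :
    ∀ (n : ℕ) (i k : V), pathLen G n i k →
      ∃ m, m ≤ n ∧ m < Fintype.card V ∧ pathLen G m i k := by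
  intro n
  induction n using Nat.strong_induction_on with
  | _ n IH =>
      intro i k h
      by_cases hn : n < Fintype.card V
      · exact ⟨n, le_refl n, hn, h⟩
      · push_neg at hn
        -- pigeonhole: find a repeated vertex along the path
        have hsplit : ∀ a : Fin (n + 1),
            ∃ j, pathLen G a.1 i j ∧ pathLen G (n - a.1) j k := by
          intro a
          exact pathLen_split h a.1 (by omega)
        choose f hf1 hf2 using hsplit
        have hcard : Fintype.card V < Fintype.card (Fin (n + 1)) := by
          simp only [Fintype.card_fin]; omega
        obtain ⟨a, b, hab, hfab⟩ := Fintype.exists_ne_map_eq_of_card_lt f hcard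
        have key : ∀ a b : Fin (n + 1), f a = f b → a.1 < b.1 →
            ∃ m ≤ n, m < Fintype.card V ∧ pathLen G m i k := by
          intro a b hfab hlt
          have p1 : pathLen G a.1 i (f a) := hf1 a
          have p2 : pathLen G (n - b.1) (f a) k := by rw [hfab]; exact hf2 b
          have pm : pathLen G (a.1 + (n - b.1)) i k := pathLen_trans p1 p2
          have hblt : b.1 ≤ n := by omega
          have hm : a.1 + (n - b.1) < n := by omega
          obtain ⟨m, hm1, hm2, hm3⟩ := IH _ hm i k pm
          exact ⟨m, by omega, hm2, hm3⟩
        have hne : a.1 ≠ b.1 := fun h => hab (Fin.ext h)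
        rcases Nat.lt_or_ge a.1 b.1 with hlt | hge
        · exact key a b hfab hlt
        · exact key b a hfab.symm (by omega)

lemma Md_iterate_toRTG {V : Type*} {G : V → V → Prop} :
    ∀ (z : ℕ) {i k : V}, Md^[z] G i k → Relation.ReflTransGen G i k := by
  intro z
  induction z with
  | zero => intro i k h; exact Relation.ReflTransGen.single h
  | succ z ih =>
      intro i k h
      rw [Function.iterate_succ_apply'] at h
      obtain ⟨hne, h | ⟨j, h1, h2⟩⟩ := h
      · exact ih h
      · exact (ih h1).trans (ih h2)

lemma Md_iterate_ne {V : Type*} {G : V → V → Prop} {z : ℕ} (hz : 0 < z) {i k : V}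
    (h : Md^[z] G i k) : i ≠ k := by
  obtain ⟨m, rfl⟩ := Nat.exists_eq_add_of_lt hz
  rw [Nat.zero_add, Function.iterate_succ_apply'] at h
  exact h.1

lemma pathLen_toMd {V : Type*} {G : V → V → Prop} :
    ∀ (z n : ℕ) (i k : V), i ≠ k → 1 ≤ n → n ≤ 2 ^ z → pathLen G n i k → Md^[z] G i k := by
  intro z
  induction z with
  | zero =>
      intro n i k hne h1 h2 hp
      interval_cases n
      obtain ⟨j, hj, hjk⟩ := hp
      cases hjk
      exact hj
  | succ z ih =>
      intro n i k hne h1 h2 hp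
      rw [Function.iterate_succ_apply']
      have hpz : (0:ℕ) < 2 ^ z := Nat.pow_pos (by norm_num)
      have h2' : n ≤ 2 * 2 ^ z := by rw [pow_succ] at h2; omega
      set a := n / 2 with ha
      have hb : a ≤ n := Nat.div_le_self n 2
      obtain ⟨j, p1, p2⟩ := pathLen_split hp a hb
      have hale : a ≤ 2 ^ z := by omega
      have hble : n - a ≤ 2 ^ z := by omega
      have hbpos : 1 ≤ n - a := by omega
      by_cases haz : a = 0
      · -- j = i
        rw [haz] at p1 p2
        cases p1
        exact ⟨hne, Or.inl (ih _ i k hne (by omega) (by omega) p2)⟩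
      · by_cases hji : j = i
        · subst hji
          exact ⟨hne, Or.inl (ih _ j k hne hbpos hble p2)⟩
        · by_cases hjk : j = k
          · subst hjk
            exact ⟨hne, Or.inl (ih _ i j hne (by omega) hale p1)⟩
          · exact ⟨hne, Or.inr ⟨j, ih _ i j (Ne.symm hji) (by omega) hale p1,
              ih _ j k hjk hbpos hble p2⟩⟩

/-- For a simple digraph on a finite nonempty vertex type, some positive iterate of
the transitive closure mapping `Md` is the simple complete digraph iff the digraph is
strongly connected. -/
theorem iterate_Md_eq_complete_iff_strongly_connected
    {V : Type*} [Fintype V] [Nonempty V] (G : V → V → Prop) (hG : Irreflexive G) :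
    (∃ z : ℕ, 0 < z ∧ Md^[z] G = fun i k : V => i ≠ k) ↔ StronglyConnected G := by
  constructor
  · rintro ⟨z, hz, hcomp⟩ u v
    by_cases huv : u = v
    · cases huv; rfl
    · have : Md^[z] G u v := by rw [hcomp]; exact huv
      exact Md_iterate_toRTG z this
  · intro hSC
    set N := Fintype.card V with hN
    have hNpos : 0 < N := Fintype.card_pos
    refine ⟨N, hNpos, ?_⟩
    funext i k
    simp only [eq_iff_iff]
    constructor
    · intro h
      exact Md_iterate_ne hNpos h
    · intro hne
      obtain ⟨n, hn⟩ := RTG_toPathLen (hSC i k)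
      obtain ⟨m, _, hm2, hm3⟩ := pathLen_shorten n i k hn
      have hm1 : 1 ≤ m := by
        rcases Nat.eq_zero_or_pos m with h0 | h1
        · subst h0; exact absurd hm3 hne
        · exact h1
      have : m ≤ 2 ^ N := le_of_lt (lt_trans hm2 (@Nat.lt_two_pow_self N))
      exact pathLen_toMd N m i k hne hm1 this hm3
end

section
/- Let n ≥ 1, let A ∈ Matrix (Fin n) (Fin n) ℝ be traceless, let (i_1,j_1),…,(i_{m_1},j_{m_1}) be pairs in Fin n with i_k ≠ j_k, and let (i_{m_1+1},j_{m_1+1}),…,(i_{m_2},j_{m_2}) be further pairs with i_k ≠ j_k. Let G_contr be the digraph on Fin n with arcs (i_1,j_1),…,(i_{m_1},j_{m_1}) and G_drift the digraph with an arc (i,j) exactly when i ≠ j and A i j ≠ 0. If the union digraph G_drift ∪ G_contr is not strongly connected, then the Lie subalgebra of Matrix (Fin n) (Fin n) ℝ generated by {A} ∪ {E i_1 j_1, …, E i_{m_1} j_{m_1}} ∪ {C i_{m_1+1} j_{m_1+1}, …, C i_{m_2} j_{m_2}} is not equal to sl(n,ℝ); equivalently, if this generated Lie subalgebra equals sl(n,ℝ),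 then G_drift ∪ G_contr is strongly connected. -/
open Matrix

attribute [local instance 100] LieRing.ofAssociativeRing

/-- The "block lower triangular" Lie subalgebra relative to a set `R`. -/
noncomputable def blockL {n : ℕ} (R : Set (Fin n)) :
    LieSubalgebra ℝ (Matrix (Fin n) (Fin n) ℝ) where
  carrier := {X | ∀ a b, a ∈ R → b ∉ R → X a b = 0}
  add_mem' := by
    intro X Y hX hY a b ha hb
    simp [Matrix.add_apply, hX a b ha hb, hY a b ha hb]
  zero_mem' := by intro a b _ _; rfl
  smul_mem' := by
    intro c X hX a b ha hb
    simp [Matrix.smul_apply, hX a b ha hb]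
  lie_mem' := by
    intro X Y hX hY a b ha hb
    have key : ∀ P Q : Matrix (Fin n) (Fin n) ℝ,
        (∀ a b, a ∈ R → b ∉ R → P a b = 0) → (∀ a b, a ∈ R → b ∉ R → Q a b = 0) →
        (P * Q) a b = 0 := by
      intro P Q hP hQ
      rw [Matrix.mul_apply]
      refine Finset.sum_eq_zero fun c _ => ?_
      by_cases hc : c ∈ R
      · rw [hQ c b hc hb, mul_zero]
      · rw [hP a c ha hc, zero_mul]
    show (X * Y - Y * X) a b = 0
    rw [Matrix.sub_apply, key X Y hX hY, key Y X hY hX, sub_zero]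

/-- Necessity of strong connectivity of the union digraph for accessibility on
`SL(n)`: if the union of the drift and controlled interaction digraphs is not
strongly connected, then the generated Lie algebra is not `sl(n, ℝ)`. -/
theorem SLn_not_strongly_connected_implies_ne_sl
    (n m₁ m₂ : ℕ) (hn : 1 ≤ n)
    (A : Matrix (Fin n) (Fin n) ℝ) (hA : A.trace = 0)
    (ijE : Fin m₁ → Fin n × Fin n) (hijE : ∀ k, (ijE k).1 ≠ (ijE k).2)
    (ijC : Fin m₂ → Fin n × Fin n) (hijC : ∀ k, (ijC k).1 ≠ (ijC k).2)
    (contrAdj driftAdj : Fin n → Fin n → Prop)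
    (hcontr : contrAdj = fun a b => ∃ k, ijE k = (a, b))
    (hdrift : driftAdj = fun a b => a ≠ b ∧ A a b ≠ 0)
    (hconn : ¬ StronglyConnected (fun a b : Fin n => driftAdj a b ∨ contrAdj a b)) :
    LieSubalgebra.lieSpan ℝ (Matrix (Fin n) (Fin n) ℝ)
        ({A} ∪ (Set.range fun k => E (ijE k).1 (ijE k).2) ∪
          (Set.range fun k => C (ijC k).1 (ijC k).2)) ≠ sl n := by
  intro heq
  simp only [StronglyConnected, not_forall] at hconn
  obtain ⟨u, v, huv⟩ := hconn
  set Adj : Fin n → Fin n → Prop := fun a b => driftAdj a b ∨ contrAdj a b with hAdj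
  set R : Set (Fin n) := {w | Relation.ReflTransGen Adj u w} with hR
  have huR : u ∈ R := Relation.ReflTransGen.refl
  have hvR : v ∉ R := huv
  have hgen : ({A} ∪ (Set.range fun k => E (ijE k).1 (ijE k).2) ∪
      (Set.range fun k => C (ijC k).1 (ijC k).2)) ⊆ (blockL R : Set _) := by
    rintro X ((rfl | ⟨k, rfl⟩) | ⟨k, rfl⟩)
    · intro a b ha hb
      by_contra hab
      have hne : a ≠ b := fun h => hb (h ▸ ha)
      exact hb (ha.tail (Or.inl (hdrift ▸ ⟨hne, hab⟩)))
    · intro a b ha hb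
      by_contra hab
      have : a = (ijE k).1 ∧ b = (ijE k).2 := by
        by_contra h
        exact hab (Matrix.single_apply_of_ne _ _ _ _ _
          (fun hc => h ⟨hc.1.symm, hc.2.symm⟩))
      obtain ⟨rfl, rfl⟩ := this
      exact hb (ha.tail (Or.inr (hcontr ▸ ⟨k, rfl⟩)))
    · intro a b ha hb
      have hne : a ≠ b := fun h => hb (h ▸ ha)
      have h1 : single (ijC k).1 (ijC k).1 (1:ℝ) a b = 0 :=
        Matrix.single_apply_of_ne _ _ _ _ _ (fun hc => hne (hc.1.symm.trans hc.2))
      have h2 : single (ijC k).2 (ijC k).2 (1:ℝ) a b = 0 :=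
        Matrix.single_apply_of_ne _ _ _ _ _ (fun hc => hne (hc.1.symm.trans hc.2))
      show (single (ijC k).1 (ijC k).1 (1:ℝ) -
        single (ijC k).2 (ijC k).2 (1:ℝ)) a b = 0
      rw [Matrix.sub_apply, h1, h2, sub_zero]
  have hle := LieSubalgebra.lieSpan_le.mpr hgen
  have huv' : u ≠ v := fun h => hvR (h ▸ huR)
  have hEuv : E u v ∈ sl n := by
    simp only [sl, LieAlgebra.SpecialLinear.sl, E]
    exact Matrix.trace_single_eq_of_ne u v 1 huv'
  have hmem : E u v ∈ LieSubalgebra.lieSpan ℝ (Matrix (Fin n) (Fin n) ℝ)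
      ({A} ∪ (Set.range fun k => E (ijE k).1 (ijE k).2) ∪
        (Set.range fun k => C (ijC k).1 (ijC k).2)) := heq ▸ hEuv
  have := hle hmem u v huR hvR
  simp [E, Matrix.single_apply_same] at this
end
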